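/- Let C be a small category and (P, r) : C -> Pos a combinatorially stable C-poset. Then for every n ∈ ℤ the Whitney homology C-module over ℚ, c ↦ WH_n(P_c, r_c) := ⊕_{x ∈ P_c : r_c(x) = n} H̃_{n-2}(Δ(P_c^{<x}); ℚ), with homomorphisms induced by the poset maps P(f) (which send P_c^{<x} into P_d^{<P(f)(x)}), is a finitely generated C-module: there are finitely many elements whose images under the maps induced by all morphisms of C span WH_n(P_d, r_d) for every object d. -/

import Mathlib

open CategoryTheory AlgebraicTopology

noncomputable def posetCC (Q : Type) [PartialOrder Q] : ChainComplex (ModuleCat ℚ) ℕ :=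
  (alternatingFaceMapComplex (ModuleCat ℚ)).obj (nerve Q ⋙ ModuleCat.free ℚ)

noncomputable def eps (Q : Type) [PartialOrder Q] : (posetCC Q).X 0 ⟶ ModuleCat.of ℚ ℚ :=
  ModuleCat.freeDesc (TypeCat.ofHom (fun _ => (1 : ℚ)))

lemma eps_apply (Q : Type) [PartialOrder Q] (y : (nerve Q).obj (Opposite.op (SimplexCategory.mk 0))) :
    eps Q (ModuleCat.freeMk y) = (1 : ℚ) :=
  (ModuleCat.freeDesc_apply _ _).trans (TypeCat.ofHom_apply _ _)

lemma delta_comp_eps (Q : Type) [PartialOrder Q] (i : Fin 2) :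
    SimplicialObject.δ (nerve Q ⋙ ModuleCat.free ℚ) i ≫ eps Q
      = ModuleCat.freeDesc (TypeCat.ofHom (fun _ => (1 : ℚ))) := by
  apply ModuleCat.free_hom_ext
  intro x
  show (eps Q) ((ModuleCat.free ℚ).map ((nerve Q).map (SimplexCategory.δ i).op) (ModuleCat.freeMk x)) = _
  rw [ModuleCat.free_map_apply, ModuleCat.freeDesc_apply]
  exact (ModuleCat.freeDesc_apply _ _).trans (TypeCat.ofHom_apply _ _)

lemma d_comp_eps (Q : Type) [PartialOrder Q] : (posetCC Q).d 1 0 ≫ eps Q = 0 := by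
  show ((alternatingFaceMapComplex (ModuleCat ℚ)).obj (nerve Q ⋙ ModuleCat.free ℚ)).d 1 0 ≫ eps Q = 0
  rw [alternatingFaceMapComplex_obj_d, AlternatingFaceMapComplex.objD, Fin.sum_univ_two,
    Fin.val_zero, pow_zero, one_smul, Fin.val_one, pow_one, neg_smul, one_smul]
  erw [Preadditive.add_comp, Preadditive.neg_comp]
  rw [delta_comp_eps Q 0, delta_comp_eps Q 1]
  exact add_neg_cancel _

/-- The augmented simplicial chain complex of (the order complex of) a poset `Q`:
in degree `m` it has the free `ℚ`-module on the `(m-1)`-simplices of the nerve of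
`Q` (with the `(-1)`-simplices being the single empty simplex), so that its
homology in degree `i + 1` is the reduced simplicial homology `H̃_i(Δ(Q); ℚ)`,
with the convention `H̃₋₁(∅; ℚ) = ℚ`. -/
noncomputable def augCC (Q : Type) [PartialOrder Q] : ChainComplex (ModuleCat ℚ) ℕ :=
  ChainComplex.of
    (fun n => match n with
      | 0 => ModuleCat.of ℚ ℚ
      | (n+1) => (posetCC Q).X n)
    (fun n => match n with
      | 0 => eps Q
      | (n+1) => (posetCC Q).d (n+1) n)
    (fun n => match n with
      | 0 => d_comp_eps Q
      | (n+1) => (posetCC Q).d_comp_d (n+2) (n+1) n)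

noncomputable def posetCCmap {Q R : Type} [PartialOrder Q] [PartialOrder R] (g : Q →o R) :
    posetCC Q ⟶ posetCC R :=
  (alternatingFaceMapComplex (ModuleCat ℚ)).map
    (Functor.whiskerRight (nerveFunctor.map (X := Cat.of Q) (Y := Cat.of R) g.monotone.functor.toCatHom)
      (ModuleCat.free ℚ))

lemma posetCCmap_comp_eps {Q R : Type} [PartialOrder Q] [PartialOrder R] (g : Q →o R) :
    (posetCCmap g).f 0 ≫ eps R = eps Q := by
  apply ModuleCat.free_hom_ext
  intro x
  show (eps R) (((posetCCmap g).f 0) (ModuleCat.freeMk x)) = (eps Q) (ModuleCat.freeMk x)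
  rw [posetCCmap]; erw [alternatingFaceMapComplex_map_f]
  show (eps R) ((ModuleCat.free ℚ).map _ (ModuleCat.freeMk x)) = (eps Q) (ModuleCat.freeMk x)
  erw [ModuleCat.free_map_apply]
  rw [eps_apply, eps_apply]

/-- The chain map on augmented complexes induced by a monotone map of posets. -/
noncomputable def augCCmap {Q R : Type} [PartialOrder Q] [PartialOrder R] (g : Q →o R) :
    augCC Q ⟶ augCC R where
  f n := match n with
    | 0 => 𝟙 (ModuleCat.of ℚ ℚ)
    | (n+1) => (posetCCmap g).f n
  comm' := by
    intro i j hij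
    obtain rfl : j + 1 = i := hij
    match j with
    | 0 =>
      show (posetCCmap g).f 0 ≫ (augCC R).d 1 0 = (augCC Q).d 1 0 ≫ 𝟙 _
      rw [Category.comp_id]
      rw [show (augCC R).d 1 0 = eps R from by simp only [augCC, ChainComplex.of.d]; rfl,
          show (augCC Q).d 1 0 = eps Q from by simp only [augCC, ChainComplex.of.d]; rfl]
      exact posetCCmap_comp_eps g
    | (n+1) =>
      show (posetCCmap g).f (n+1) ≫ (augCC R).d (n+2) (n+1) = (augCC Q).d (n+2) (n+1) ≫ (posetCCmap g).f n
      rw [show (augCC R).d (n+2) (n+1) = (posetCC R).d (n+1) n from by simp only [augCC, ChainComplex.of.d]; exact (dif_pos (rfl : n + 2 = n + 1 + 1)).trans (Category.id_comp _),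
          show (augCC Q).d (n+2) (n+1) = (posetCC Q).d (n+1) n from by simp only [augCC, ChainComplex.of.d]; exact (dif_pos (rfl : n + 2 = n + 1 + 1)).trans (Category.id_comp _)]
      exact (posetCCmap g).comm (n+1) n

/-- Reduced simplicial homology (with `ℚ`-coefficients) of the order complex of
a finite poset, with the convention `H̃₋₁(∅; ℚ) = ℚ` and `H̃_i = 0` for `i < -1`. -/
noncomputable def reducedH (Q : Type) [PartialOrder Q] : ℤ → ModuleCat ℚ
  | Int.ofNat n => (augCC Q).homology (n + 1)
  | Int.negSucc 0 => (augCC Q).homology 0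
  | Int.negSucc (_ + 1) => ModuleCat.of ℚ PUnit

/-- The map induced on reduced homology of order complexes by a monotone map. -/
noncomputable def reducedHmap {Q R : Type} [PartialOrder Q] [PartialOrder R] (g : Q →o R) :
    ∀ i : ℤ, reducedH Q i ⟶ reducedH R i
  | Int.ofNat n => HomologicalComplex.homologyMap (augCCmap g) (n + 1)
  | Int.negSucc 0 => HomologicalComplex.homologyMap (augCCmap g) 0
  | Int.negSucc (_ + 1) => 0

universe u v

/-- A `C`-poset: a functor from `C` to the category of finite ranked posets. -/
structure CPoset (C : Type u) [CategoryTheory.Category.{v} C] where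
  P : C → Type
  [po : ∀ c, PartialOrder (P c)]
  [pfin : ∀ c, Finite (P c)]
  rk : ∀ c, P c → ℤ
  rk_strictMono : ∀ c, StrictMono (rk c)
  map : ∀ {c d : C}, (c ⟶ d) → (P c →o P d)
  map_id : ∀ c : C, map (𝟙 c) = OrderHom.id
  map_comp : ∀ {c d e : C} (f : c ⟶ d) (g : d ⟶ e), map (f ≫ g) = (map g).comp (map f)
  map_rk : ∀ {c d : C} (f : c ⟶ d) (x : P c), rk d (map f x) = rk c x

attribute [instance] CPoset.po CPoset.pfin

variable {C : Type u} [Category.{v} C]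

/-- Finite generation of a `C`-poset: in each rank, finitely many elements
generate everything under the maps induced by morphisms of `C`. -/
def CPoset.FinGen (P : CPoset C) : Prop :=
  ∀ n : ℤ, ∃ (N : ℕ) (cs : Fin N → C) (xs : ∀ i, P.P (cs i)),
    (∀ i, P.rk (cs i) (xs i) = n) ∧
    ∀ (d : C) (y : P.P d), P.rk d y = n →
      ∃ (i : Fin N) (f : cs i ⟶ d), P.map f (xs i) = y

/-- Downward stability of a `C`-poset: each induced map restricts to a poset
isomorphism `P_c^{<x} ≅ P_d^{<f(x)}`. -/
def CPoset.DownwardStable (P : CPoset C) : Prop :=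
  ∀ {c d : C} (f : c ⟶ d) (x : P.P c),
    Set.BijOn (P.map f) {y | y < x} {z | z < P.map f x} ∧
    ∀ y₁ y₂ : P.P c, y₁ < x → y₂ < x → P.map f y₁ ≤ P.map f y₂ → y₁ ≤ y₂

/-- For `x` in a `C`-poset and `f : c ⟶ d`, the strict order ideal below `x`
maps to the strict order ideal below `f(x)`. -/
def CPoset.mapBelow (P : CPoset C) {c d : C} (f : c ⟶ d) (x : P.P c) :
    {y : P.P c // y < x} →o {z : P.P d // z < P.map f x} where
  toFun y := ⟨P.map f y.1, by
    refine lt_of_le_of_ne ((P.map f).monotone (le_of_lt y.2)) ?_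
    intro h
    have h1 : P.rk d (P.map f y.1) = P.rk c y.1 := P.map_rk f y.1
    have h2 : P.rk d (P.map f x) = P.rk c x := P.map_rk f x
    have h3 : P.rk c y.1 < P.rk c x := P.rk_strictMono c y.2
    rw [h] at h1
    omega⟩
  monotone' := fun y₁ y₂ h => (P.map f).monotone h

open scoped DirectSum in
/-- The `n`-th Whitney homology of (the value at `c` of) a `C`-poset. -/
noncomputable def WH (P : CPoset C) (n : ℤ) (c : C) : Type :=
  ⨁ (x : {x : P.P c // P.rk c x = n}), ↥(reducedH {y : P.P c // y < x.1} (n - 2))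

noncomputable instance (P : CPoset C) (n : ℤ) (c : C) : AddCommGroup (WH P n c) := by
  unfold WH; infer_instance

noncomputable instance (P : CPoset C) (n : ℤ) (c : C) : Module ℚ (WH P n c) := by
  unfold WH; infer_instance

/-- The map induced on Whitney homology by a morphism of `C`. -/
noncomputable def WHmap (P : CPoset C) (n : ℤ) {c d : C} (f : c ⟶ d) :
    WH P n c →ₗ[ℚ] WH P n d :=
  letI := Classical.decEq {x : P.P c // P.rk c x = n}
  letI := Classical.decEq {x : P.P d // P.rk d x = n}
  DirectSum.toModule ℚ {x : P.P c // P.rk c x = n} (WH P n d) (fun x =>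
    (DirectSum.lof ℚ {x' : P.P d // P.rk d x' = n}
        (fun x' => ↥(reducedH {y : P.P d // y < x'.1} (n - 2)))
        ⟨P.map f x.1, by rw [P.map_rk]; exact x.2⟩).comp
      ((reducedHmap (P.mapBelow f x.1) (n - 2)).hom : _ →ₗ[ℚ] _))


section Aux

instance nerveFinite (Q : Type) [PartialOrder Q] [Finite Q] (m : ℕ) :
    Finite ((nerve Q).obj (Opposite.op (SimplexCategory.mk m))) := by
  have : Function.Injective (fun (F : ComposableArrows Q m) => F.obj) := by
    intro F G h
    exact CategoryTheory.Functor.ext (fun x => congrFun h x)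
      (fun _ _ _ => Subsingleton.elim _ _)
  exact Finite.of_injective _ this

noncomputable def bigF : Cat.{0,0} ⥤ ChainComplex (ModuleCat ℚ) ℕ :=
  nerveFunctor ⋙ (Functor.whiskeringRight _ _ _).obj (ModuleCat.free ℚ) ⋙
    alternatingFaceMapComplex (ModuleCat ℚ)

lemma posetCCmap_id (Q : Type) [PartialOrder Q] :
    posetCCmap (OrderHom.id : Q →o Q) = 𝟙 (posetCC Q) :=
  bigF.map_id (Cat.of Q)

lemma posetCCmap_comp {Q R S : Type} [PartialOrder Q] [PartialOrder R] [PartialOrder S]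
    (g : R →o S) (h : Q →o R) :
    posetCCmap (g.comp h) = posetCCmap h ≫ posetCCmap g :=
  @Functor.map_comp _ _ _ _ bigF (Cat.of Q) (Cat.of R) (Cat.of S)
    h.monotone.functor.toCatHom g.monotone.functor.toCatHom

lemma augCCmap_id (Q : Type) [PartialOrder Q] :
    augCCmap (OrderHom.id : Q →o Q) = 𝟙 (augCC Q) := by
  apply HomologicalComplex.hom_ext
  intro n
  match n with
  | 0 => rfl
  | (n+1) =>
    show (posetCCmap (OrderHom.id : Q →o Q)).f n = _
    rw [posetCCmap_id]; rfl

lemma augCCmap_comp {Q R S : Type} [PartialOrder Q] [PartialOrder R] [PartialOrder S]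
    (g : R →o S) (h : Q →o R) :
    augCCmap (g.comp h) = augCCmap h ≫ augCCmap g := by
  apply HomologicalComplex.hom_ext
  intro n
  match n with
  | 0 => exact (Category.comp_id _).symm
  | (n+1) =>
    show (posetCCmap (g.comp h)).f n = (posetCCmap h).f n ≫ (posetCCmap g).f n
    rw [posetCCmap_comp]; rfl

lemma reducedHmap_id (Q : Type) [PartialOrder Q] (i : ℤ) :
    reducedHmap (OrderHom.id : Q →o Q) i = 𝟙 (reducedH Q i) := by
  match i with
  | Int.ofNat n =>
    show HomologicalComplex.homologyMap _ _ = _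
    rw [augCCmap_id, HomologicalComplex.homologyMap_id]; rfl
  | Int.negSucc 0 =>
    show HomologicalComplex.homologyMap _ _ = _
    rw [augCCmap_id, HomologicalComplex.homologyMap_id]; rfl
  | Int.negSucc (k+1) =>
    show (0 : ModuleCat.of ℚ PUnit ⟶ ModuleCat.of ℚ PUnit) = 𝟙 _
    apply ModuleCat.hom_ext
    apply LinearMap.ext
    intro x
    exact Subsingleton.elim _ _

lemma reducedHmap_comp {Q R S : Type} [PartialOrder Q] [PartialOrder R] [PartialOrder S]
    (g : R →o S) (h : Q →o R) (i : ℤ) :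
    reducedHmap (g.comp h) i = reducedHmap h i ≫ reducedHmap g i := by
  match i with
  | Int.ofNat n =>
    show HomologicalComplex.homologyMap _ _ = _
    rw [augCCmap_comp, HomologicalComplex.homologyMap_comp]; rfl
  | Int.negSucc 0 =>
    show HomologicalComplex.homologyMap _ _ = _
    rw [augCCmap_comp, HomologicalComplex.homologyMap_comp]; rfl
  | Int.negSucc (k+1) =>
    show (0 : ModuleCat.of ℚ PUnit ⟶ ModuleCat.of ℚ PUnit) = 0 ≫ 0
    rw [Limits.comp_zero]

lemma reducedHmap_surj {Q R : Type} [PartialOrder Q] [PartialOrder R]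
    (g : Q →o R) (h : R →o Q) (hgh : g.comp h = OrderHom.id) (i : ℤ) :
    Function.Surjective (reducedHmap g i) := by
  intro z
  refine ⟨reducedHmap h i z, ?_⟩
  have hc : reducedHmap h i ≫ reducedHmap g i = 𝟙 (reducedH R i) := by
    rw [← reducedHmap_comp, hgh, reducedHmap_id]
  calc reducedHmap g i (reducedHmap h i z)
      = (reducedHmap h i ≫ reducedHmap g i) z := rfl
    _ = z := by rw [hc]; rfl

variable {C : Type u} [Category.{v} C]

lemma mapBelow_inv (P : CPoset C) (hds : P.DownwardStable) {c d : C} (f : c ⟶ d) (x : P.P c) :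
    ∃ h : {z : P.P d // z < P.map f x} →o {y : P.P c // y < x},
      (P.mapBelow f x).comp h = OrderHom.id := by
  obtain ⟨hbij, hrefl⟩ := hds f x
  have hsurj : ∀ z : {z : P.P d // z < P.map f x}, ∃ y : P.P c, y < x ∧ P.map f y = z.1 := by
    intro z
    obtain ⟨y, hy, hyz⟩ := hbij.surjOn z.2
    exact ⟨y, hy, hyz⟩
  choose yf hy1 hy2 using hsurj
  refine ⟨⟨fun z => ⟨yf z, hy1 z⟩, ?_⟩, ?_⟩
  · intro z₁ z₂ hz
    exact hrefl _ _ (hy1 z₁) (hy1 z₂) (by rw [hy2 z₁, hy2 z₂]; exact hz)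
  · apply OrderHom.ext
    funext z
    exact Subtype.ext (hy2 z)

lemma homology_finite (Q : Type) [PartialOrder Q] [Finite Q] (m : ℕ) :
    Module.Finite ℚ ((augCC Q).homology m) := by
  have hX : ∀ k : ℕ, Module.Finite ℚ ((augCC Q).X k) := by
    intro k
    match k with
    | 0 => show Module.Finite ℚ ℚ; infer_instance
    | (k+1) =>
      show Module.Finite ℚ (((nerve Q).obj (Opposite.op (SimplexCategory.mk k))) →₀ ℚ)
      infer_instance
  haveI := hX m
  haveI : Module.Finite ℚ ((augCC Q).cycles m) :=
    FiniteDimensional.of_injective ((augCC Q).iCycles m).hom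
      ((ModuleCat.mono_iff_injective _).1 inferInstance)
  exact Module.Finite.of_surjective ((augCC Q).homologyπ m).hom
    ((ModuleCat.epi_iff_surjective _).1 inferInstance)

lemma reducedH_finite (Q : Type) [PartialOrder Q] [Finite Q] (i : ℤ) :
    Module.Finite ℚ (reducedH Q i) := by
  match i with
  | Int.ofNat n => exact homology_finite Q (n+1)
  | Int.negSucc 0 => exact homology_finite Q 0
  | Int.negSucc (k+1) => show Module.Finite ℚ PUnit; infer_instance

end Aux


lemma lof_decEq_irrel {ι : Type} (M : ι → Type) [∀ i, AddCommMonoid (M i)]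
    [∀ i, Module ℚ (M i)] (d₁ d₂ : DecidableEq ι) (i : ι) (x : M i) :
    @DirectSum.lof ℚ _ ι M _ _ d₁ i x = @DirectSum.lof ℚ _ ι M _ _ d₂ i x := by
  have : d₁ = d₂ := by
    funext a b
    exact Subsingleton.elim _ _
  rw [this]

lemma WHmap_lof (P : CPoset C) (n : ℤ) {c d : C} (f : c ⟶ d)
    [inst1 : DecidableEq {x : P.P c // P.rk c x = n}]
    [inst2 : DecidableEq {x : P.P d // P.rk d x = n}]
    (x : {x : P.P c // P.rk c x = n}) (v : ↥(reducedH {y : P.P c // y < x.1} (n - 2))) :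
    WHmap P n f (DirectSum.lof ℚ {x : P.P c // P.rk c x = n}
        (fun x' => ↥(reducedH {y : P.P c // y < x'.1} (n - 2))) x v) =
      DirectSum.lof ℚ {x' : P.P d // P.rk d x' = n}
        (fun x' => ↥(reducedH {y : P.P d // y < x'.1} (n - 2)))
        ⟨P.map f x.1, by rw [P.map_rk]; exact x.2⟩
        ((reducedHmap (P.mapBelow f x.1) (n - 2)).hom v) := by
  rw [lof_decEq_irrel _ inst1 (Classical.decEq _),
    lof_decEq_irrel _ inst2 (Classical.decEq _)]
  exact @DirectSum.toModule_lof ℚ _ {x : P.P c // P.rk c x = n}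
    (fun x' => ↥(reducedH {y : P.P c // y < x'.1} (n - 2))) _ _
    (Classical.decEq _) (WH P n d) _ _ _ x v

/-- **Finitely generated Whitney homology.** If a `C`-poset `(P, rk)` is
combinatorially stable (finitely generated and downward stable), then for every
`n ∈ ℤ` its `n`-th Whitney homology
`c ↦ WH_n(P_c) = ⊕_{x ∈ P_c, rk(x) = n} H̃_{n-2}(Δ(P_c^{<x}); ℚ)`,
with the maps induced by the poset maps, is a finitely generated `C`-module. -/
theorem whitney_homology_finitelyGenerated (P : CPoset C)
    (hfg : P.FinGen) (hds : P.DownwardStable) (n : ℤ) :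
    ∃ (N : ℕ) (cs : Fin N → C) (v : ∀ i, WH P n (cs i)),
      ∀ d : C, Submodule.span ℚ
        {w : WH P n d | ∃ (i : Fin N) (f : cs i ⟶ d), WHmap P n f (v i) = w} = ⊤ := by
  classical
  obtain ⟨N, cs, xs, hrk, hgen⟩ := hfg n
  haveI : ∀ i : Fin N, Module.Finite ℚ ↥(reducedH {y : P.P (cs i) // y < xs i} (n - 2)) :=
    fun i => reducedH_finite _ _
  have hfin : ∀ i : Fin N, ∃ (k : ℕ)
      (s : Fin k → ↥(reducedH {y : P.P (cs i) // y < xs i} (n - 2))),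
      Submodule.span ℚ (Set.range s) = ⊤ := fun i => Module.Finite.exists_fin
  choose k s hs using hfin
  let T := (i : Fin N) × Fin (k i)
  let e : Fin (Fintype.card T) ≃ T := (Fintype.equivFin T).symm
  refine ⟨Fintype.card T, fun j => cs (e j).1, fun j =>
    DirectSum.lof ℚ {x : P.P (cs (e j).1) // P.rk (cs (e j).1) x = n}
      (fun x' => ↥(reducedH {y : P.P (cs (e j).1) // y < x'.1} (n - 2)))
      ⟨xs (e j).1, hrk (e j).1⟩ (s (e j).1 (e j).2), ?_⟩
  intro d
  rw [Submodule.eq_top_iff']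
  intro w
  have key : ∀ (x : {x : P.P d // P.rk d x = n})
      (u : ↥(reducedH {y : P.P d // y < x.1} (n - 2))),
      DirectSum.lof ℚ {x : P.P d // P.rk d x = n}
        (fun x' => ↥(reducedH {y : P.P d // y < x'.1} (n - 2))) x u ∈
      Submodule.span ℚ {w : WH P n d | ∃ j f,
        WHmap P n f (DirectSum.lof ℚ {x : P.P (cs (e j).1) // P.rk (cs (e j).1) x = n}
          (fun x' => ↥(reducedH {y : P.P (cs (e j).1) // y < x'.1} (n - 2)))
          ⟨xs (e j).1, hrk (e j).1⟩ (s (e j).1 (e j).2)) = w} := by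
    rintro ⟨x, hx⟩ u
    obtain ⟨i, f, hf⟩ := hgen d x hx
    subst hf
    obtain ⟨hinv, hinv_eq⟩ := mapBelow_inv P hds f (xs i)
    obtain ⟨u', hu'⟩ := reducedHmap_surj (P.mapBelow f (xs i)) hinv hinv_eq (n - 2) u
    set Ψ : ↥(reducedH {y : P.P (cs i) // y < xs i} (n - 2)) →ₗ[ℚ] WH P n d :=
      (WHmap P n f).comp (DirectSum.lof ℚ {x : P.P (cs i) // P.rk (cs i) x = n}
        (fun x' => ↥(reducedH {y : P.P (cs i) // y < x'.1} (n - 2)))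
        ⟨xs i, hrk i⟩) with hΨdef
    have hΨ : ∀ u'', Ψ u'' ∈ Submodule.span ℚ {w : WH P n d | ∃ j f,
        WHmap P n f (DirectSum.lof ℚ {x : P.P (cs (e j).1) // P.rk (cs (e j).1) x = n}
          (fun x' => ↥(reducedH {y : P.P (cs (e j).1) // y < x'.1} (n - 2)))
          ⟨xs (e j).1, hrk (e j).1⟩ (s (e j).1 (e j).2)) = w} := by
      intro u''
      have hu'' : u'' ∈ Submodule.span ℚ (Set.range (s i)) := by
        rw [hs i]; trivial
      refine Submodule.span_induction ?_ ?_ ?_ ?_ hu''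
      · rintro _ ⟨j, rfl⟩
        apply Submodule.subset_span
        have ht : ∀ t : T, t = ⟨i, j⟩ →
            ∃ (f₀ : cs t.1 ⟶ d), WHmap P n f₀
              (DirectSum.lof ℚ {x : P.P (cs t.1) // P.rk (cs t.1) x = n}
                (fun x' => ↥(reducedH {y : P.P (cs t.1) // y < x'.1} (n - 2)))
                ⟨xs t.1, hrk t.1⟩ (s t.1 t.2)) = Ψ (s i j) := by
          intro t h
          subst h
          exact ⟨f, rfl⟩
        obtain ⟨f₀, hf₀⟩ := ht (e (e.symm ⟨i, j⟩)) (e.apply_symm_apply _)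
        exact ⟨e.symm ⟨i, j⟩, f₀, hf₀⟩
      · rw [map_zero]; exact Submodule.zero_mem _
      · intro a b _ _ ha hb
        rw [map_add]; exact Submodule.add_mem _ ha hb
      · intro q a _ ha
        rw [map_smul]; exact Submodule.smul_mem _ _ ha
    have heq : Ψ u' = DirectSum.lof ℚ {x : P.P d // P.rk d x = n}
        (fun x' => ↥(reducedH {y : P.P d // y < x'.1} (n - 2)))
        ⟨P.map f (xs i), hx⟩ u := by
      have h1 : WHmap P n f (DirectSum.lof ℚ {x : P.P (cs i) // P.rk (cs i) x = n}
          (fun x' => ↥(reducedH {y : P.P (cs i) // y < x'.1} (n - 2)))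
          ⟨xs i, hrk i⟩ u') = DirectSum.lof ℚ {x' : P.P d // P.rk d x' = n}
          (fun x' => ↥(reducedH {y : P.P d // y < x'.1} (n - 2)))
          ⟨P.map f (xs i), hx⟩
          ((reducedHmap (P.mapBelow f (xs i)) (n - 2)).hom u') :=
        WHmap_lof P n f ⟨xs i, hrk i⟩ u'
      rw [hΨdef]
      exact h1.trans (congrArg _ hu')
    rw [← heq]
    exact hΨ u'
  have hw := DirectSum.sum_support_of (β := fun x : {x : P.P d // P.rk d x = n} =>
      ↥(reducedH {y : P.P d // y < x.1} (n - 2))) w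
  rw [← hw]
  refine Submodule.sum_mem _ fun x _ => ?_
  rw [← DirectSum.lof_eq_of ℚ]
  exact key x _
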